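/- Let B₁,B₂,B₃ be Hermitian n×n matrices, M > 0, and for P ∈ ℝ³ define K(P) := (Σⱼ(Pⱼ I + Bⱼ)² + M² I)^{1/2} (positive semidefinite square root) and E(P) := λ_min(K(P)) the smallest eigenvalue. Then for all P, k ∈ ℝ³: E(P−k) − E(P) + |k| ≥ 0. -/

import Mathlib

open scoped ComplexOrder Classical

/-- The positive semidefinite square root of a matrix (junk value `0` if the matrix
is not positive semidefinite). -/

noncomputable def matSqrt {n : ℕ} (A : Matrix (Fin n) (Fin n) ℂ) :
    Matrix (Fin n) (Fin n) ℂ :=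
  if h : A.PosSemidef then
    h.1.eigenvectorUnitary.1 * Matrix.diagonal ((↑) ∘ (√·) ∘ h.1.eigenvalues) *
      (star h.1.eigenvectorUnitary : Matrix (Fin n) (Fin n) ℂ)
  else 0

/-- The smallest eigenvalue of a Hermitian matrix (junk value `0` otherwise). -/
noncomputable def lamMin {n : ℕ} (A : Matrix (Fin n) (Fin n) ℂ) : ℝ :=
  if h : A.IsHermitian then ⨅ i, h.eigenvalues i else 0

open Matrix

section Aux

variable {n : ℕ}

lemma cs_sum {m : ℕ} (f g : Fin m → ℝ) :
    ∑ i, f i * g i ≤ Real.sqrt (∑ i, f i ^ 2) * Real.sqrt (∑ i, g i ^ 2) := by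
  have h := Finset.sum_mul_sq_le_sq_mul_sq Finset.univ f g
  calc ∑ i, f i * g i ≤ |∑ i, f i * g i| := le_abs_self _
    _ = Real.sqrt ((∑ i, f i * g i) ^ 2) := (Real.sqrt_sq_eq_abs _).symm
    _ ≤ Real.sqrt ((∑ i, f i ^ 2) * ∑ i, g i ^ 2) := Real.sqrt_le_sqrt h
    _ = _ := Real.sqrt_mul (Finset.sum_nonneg fun i _ => sq_nonneg _) _

lemma key_re (r : ℝ) (z : ℂ) : (star z * ((r : ℂ) * z)).re = r * Complex.normSq z := by
  rw [show star z * ((r:ℂ) * z) = (r:ℂ) * (z * star z) by ring, Complex.star_def,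
    Complex.mul_conj, Complex.re_ofReal_mul, Complex.ofReal_re]

lemma dot_self_re (w : Fin n → ℂ) :
    Complex.re (dotProduct (star w) w) = ∑ i, Complex.normSq (w i) := by
  rw [dotProduct, Complex.re_sum]
  refine Finset.sum_congr rfl fun i _ => ?_
  simpa using key_re 1 (w i)

lemma dot_re_le (ψ w : Fin n → ℂ) :
    Complex.re (dotProduct (star ψ) w) ≤
      Real.sqrt (∑ i, Complex.normSq (ψ i)) * Real.sqrt (∑ i, Complex.normSq (w i)) := by
  have h1 : Complex.re (dotProduct (star ψ) w)
      ≤ ∑ i, ‖ψ i‖ * ‖w i‖ := by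
    rw [dotProduct, Complex.re_sum]
    refine Finset.sum_le_sum fun i _ => ?_
    calc (star (ψ i) * w i).re ≤ ‖star (ψ i) * w i‖ := Complex.re_le_norm _
      _ = ‖ψ i‖ * ‖w i‖ := by
          rw [norm_mul]; simp
  refine h1.trans ?_
  have := cs_sum (fun i => ‖ψ i‖) (fun i => ‖w i‖)
  simpa [Complex.sq_norm] using this

lemma herm_vec_sq (X : Matrix (Fin n) (Fin n) ℂ) (hX : X.IsHermitian) (ψ : Fin n → ℂ) :
    dotProduct (star ψ) ((X * X) *ᵥ ψ)
      = dotProduct (star (X *ᵥ ψ)) (X *ᵥ ψ) := by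
  rw [star_mulVec, ← Matrix.mulVec_mulVec, dotProduct_mulVec, hX.eq]

lemma smul_one_herm (r : ℝ) : ((r : ℂ) • (1 : Matrix (Fin n) (Fin n) ℂ)).IsHermitian := by
  simp [Matrix.IsHermitian, Matrix.conjTranspose_smul, Complex.star_def, Complex.conj_ofReal]

lemma psd_sq {X : Matrix (Fin n) (Fin n) ℂ} (hX : X.IsHermitian) : (X ^ 2).PosSemidef := by
  have := Matrix.posSemidef_conjTranspose_mul_self X
  rwa [hX.eq, ← pow_two] at this

lemma psd_expr (X : Fin 3 → Matrix (Fin n) (Fin n) ℂ) (hX : ∀ j, (X j).IsHermitian) (M : ℝ) :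
    ((∑ j, (X j) ^ 2) + ((M ^ 2 : ℝ) : ℂ) • (1 : Matrix (Fin n) (Fin n) ℂ)).PosSemidef := by
  have h1 : (∑ j, (X j) ^ 2 : Matrix (Fin n) (Fin n) ℂ).PosSemidef := by
    rw [Fin.sum_univ_three]
    exact ((psd_sq (hX 0)).add (psd_sq (hX 1))).add (psd_sq (hX 2))
  refine h1.add ?_
  rw [Matrix.smul_one_eq_diagonal]
  exact Matrix.PosSemidef.diagonal fun i => Complex.zero_le_real.mpr (sq_nonneg M)

lemma matSqrt_spec {A : Matrix (Fin n) (Fin n) ℂ} (hA : A.PosSemidef) :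
    (matSqrt A).PosSemidef ∧ (matSqrt A) ^ 2 = A := by
  rw [matSqrt, dif_pos hA]
  have hd : ∀ i, (0 : ℂ) ≤ (((↑) ∘ (√·) ∘ hA.1.eigenvalues : Fin n → ℂ) i) := fun i => by
    simp [Complex.zero_le_real, Real.sqrt_nonneg]
  have h1 : (star hA.1.eigenvectorUnitary : Matrix (Fin n) (Fin n) ℂ) *
      hA.1.eigenvectorUnitary.1 = 1 := Unitary.coe_star_mul_self _
  constructor
  · have := (Matrix.PosSemidef.diagonal hd).mul_mul_conjTranspose_same hA.1.eigenvectorUnitary.1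
    convert this using 2
    simp [Matrix.star_eq_conjTranspose]
  · conv_rhs => rw [hA.1.spectral_theorem, Unitary.conjStarAlgAut_apply]
    rw [pow_two]
    calc _ = hA.1.eigenvectorUnitary.1 * (Matrix.diagonal ((↑) ∘ (√·) ∘ hA.1.eigenvalues) *
          ((star hA.1.eigenvectorUnitary : Matrix (Fin n) (Fin n) ℂ) *
          hA.1.eigenvectorUnitary.1) * Matrix.diagonal ((↑) ∘ (√·) ∘ hA.1.eigenvalues)) *
          (star hA.1.eigenvectorUnitary : Matrix (Fin n) (Fin n) ℂ) := by
            simp only [mul_assoc]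
      _ = _ := by
        rw [h1, mul_one, Matrix.diagonal_mul_diagonal]
        congr 3
        funext i
        simp only [Function.comp_apply, RCLike.ofReal_real_eq_id, id]
        rw [← Complex.ofReal_mul, Real.mul_self_sqrt (hA.eigenvalues_nonneg i)]
        rfl

lemma rayleigh_min_le (A : Matrix (Fin n) (Fin n) ℂ) (hA : A.IsHermitian)
    (ψ : Fin n → ℂ) (hψ : dotProduct (star ψ) ψ = 1) :
    (⨅ i, hA.eigenvalues i) ≤ Complex.re (dotProduct (star ψ) (A *ᵥ ψ)) := by
  classical
  set U : Matrix (Fin n) (Fin n) ℂ := (hA.eigenvectorUnitary : Matrix (Fin n) (Fin n) ℂ) with hU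
  set v : Fin n → ℂ := (star U) *ᵥ ψ with hv
  have hUs : star v = star ψ ᵥ* U := by
    simp [hv, star_mulVec, Matrix.star_eq_conjTranspose]
  have hqf : dotProduct (star ψ) (A *ᵥ ψ)
      = dotProduct (star v) (Matrix.diagonal (RCLike.ofReal ∘ hA.eigenvalues) *ᵥ v) := by
    conv_lhs => rw [hA.spectral_theorem, Unitary.conjStarAlgAut_apply]
    rw [← Matrix.mulVec_mulVec, ← Matrix.mulVec_mulVec, dotProduct_mulVec, ← hUs, hv]
  have hnorm : dotProduct (star v) v = 1 := by
    rw [hUs, hv, ← dotProduct_mulVec, Matrix.mulVec_mulVec]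
    rw [show U * star U = 1 from (Matrix.mem_unitaryGroup_iff).mp hA.eigenvectorUnitary.2]
    rw [Matrix.one_mulVec]
    exact hψ
  have hdiag : Complex.re (dotProduct (star v)
        (Matrix.diagonal (RCLike.ofReal ∘ hA.eigenvalues) *ᵥ v))
      = ∑ i, hA.eigenvalues i * Complex.normSq (v i) := by
    rw [dotProduct]
    rw [Complex.re_sum]
    refine Finset.sum_congr rfl fun i _ => ?_
    simp only [Pi.star_apply, Matrix.mulVec_diagonal, Function.comp_apply]
    exact key_re (hA.eigenvalues i) (v i)
  have hnorm' : ∑ i, Complex.normSq (v i) = 1 := by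
    have := congrArg Complex.re hnorm
    rw [dotProduct, Complex.re_sum] at this
    rw [Complex.one_re] at this
    rw [← this]
    refine Finset.sum_congr rfl fun i _ => ?_
    have := key_re 1 (v i)
    simpa using (this.symm)
  calc (⨅ i, hA.eigenvalues i) = ∑ i, (⨅ j, hA.eigenvalues j) * Complex.normSq (v i) := by
        rw [← Finset.mul_sum, hnorm', mul_one]
    _ ≤ ∑ i, hA.eigenvalues i * Complex.normSq (v i) := by
        refine Finset.sum_le_sum fun i _ => ?_
        exact mul_le_mul_of_nonneg_right (ciInf_le (Finite.bddBelow_range _) i)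
          (Complex.normSq_nonneg _)
    _ = _ := by rw [hqf, hdiag]

lemma eigvec_unit {A : Matrix (Fin n) (Fin n) ℂ} (hA : A.IsHermitian) (i : Fin n) :
    dotProduct (star ⇑(hA.eigenvectorBasis i)) ⇑(hA.eigenvectorBasis i) = 1 := by
  have h := EuclideanSpace.inner_eq_star_dotProduct (𝕜 := ℂ)
    (hA.eigenvectorBasis i) (hA.eigenvectorBasis i)
  rw [inner_self_eq_norm_sq_to_K, hA.eigenvectorBasis.orthonormal.1 i] at h
  rw [dotProduct_comm]
  simpa using h.symm

lemma sq_shift (X : Matrix (Fin n) (Fin n) ℂ) (κ : ℝ) :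
    (X + (κ : ℂ) • 1) ^ 2 = X ^ 2 + ((2 * κ : ℝ) : ℂ) • X + ((κ ^ 2 : ℝ) : ℂ) • 1 := by
  push_cast
  simp only [pow_two, add_mul, mul_add, Matrix.smul_mul, Matrix.mul_smul, Matrix.one_mul,
    Matrix.mul_one, smul_smul, add_smul, two_mul]
  abel

lemma q_add (W₁ W₂ : Matrix (Fin n) (Fin n) ℂ) (ψ : Fin n → ℂ) :
    Complex.re (star ψ ⬝ᵥ (W₁ + W₂) *ᵥ ψ)
      = Complex.re (star ψ ⬝ᵥ W₁ *ᵥ ψ) + Complex.re (star ψ ⬝ᵥ W₂ *ᵥ ψ) := by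
  rw [Matrix.add_mulVec, dotProduct_add, Complex.add_re]

lemma q_smul (r : ℝ) (W : Matrix (Fin n) (Fin n) ℂ) (ψ : Fin n → ℂ) :
    Complex.re (star ψ ⬝ᵥ ((r : ℂ) • W) *ᵥ ψ) = r * Complex.re (star ψ ⬝ᵥ W *ᵥ ψ) := by
  rw [Matrix.smul_mulVec, dotProduct_smul, smul_eq_mul, Complex.re_ofReal_mul]

end Aux

/-- Finite-dimensional model of the main theorem: with
`K(P) := (∑ⱼ(PⱼI+Bⱼ)² + M²I)^{1/2}` and `E(P) := λ_min(K(P))`, one has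
`E(P−k) − E(P) + |k| ≥ 0` for all `P, k ∈ ℝ³`. -/
theorem stmt_12 {n : ℕ} (hn : 0 < n) (B : Fin 3 → Matrix (Fin n) (Fin n) ℂ)
    (hB : ∀ j, (B j).IsHermitian) (M : ℝ) (hM : 0 < M)
    (K : (Fin 3 → ℝ) → Matrix (Fin n) (Fin n) ℂ)
    (hK : ∀ P : Fin 3 → ℝ, K P = matSqrt
      ((∑ j, ((P j : ℂ) • (1 : Matrix (Fin n) (Fin n) ℂ) + B j) ^ 2)
        + ((M ^ 2 : ℝ) : ℂ) • (1 : Matrix (Fin n) (Fin n) ℂ)))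
    (E : (Fin 3 → ℝ) → ℝ) (hE : ∀ P, E P = lamMin (K P)) :
    ∀ P k : Fin 3 → ℝ, 0 ≤ E (P - k) - E P + Real.sqrt (∑ j, (k j) ^ 2) := by
  classical
  intro P k
  have : Nonempty (Fin n) := ⟨⟨0, hn⟩⟩
  have sqsum_nonneg : (0:ℝ) ≤ ∑ j, k j ^ 2 := Finset.sum_nonneg fun j _ => sq_nonneg _
  set c := Real.sqrt (∑ j, k j ^ 2) with hc
  have hc0 : 0 ≤ c := Real.sqrt_nonneg _
  have hc2 : c ^ 2 = ∑ j, k j ^ 2 := Real.sq_sqrt sqsum_nonneg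
  -- Hermitian ingredients
  have hXh : ∀ j : Fin 3,
      ((((P - k) j : ℝ) : ℂ) • (1 : Matrix (Fin n) (Fin n) ℂ) + B j).IsHermitian :=
    fun j => (smul_one_herm _).add (hB j)
  have hYh : ∀ j : Fin 3,
      (((P j : ℝ) : ℂ) • (1 : Matrix (Fin n) (Fin n) ℂ) + B j).IsHermitian :=
    fun j => (smul_one_herm _).add (hB j)
  have hA₁ : ((∑ j, (((P - k) j : ℂ) • (1 : Matrix (Fin n) (Fin n) ℂ) + B j) ^ 2)
      + ((M ^ 2 : ℝ) : ℂ) • (1 : Matrix (Fin n) (Fin n) ℂ)).PosSemidef := psd_expr _ hXh M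
  have hA₂ : ((∑ j, ((P j : ℂ) • (1 : Matrix (Fin n) (Fin n) ℂ) + B j) ^ 2)
      + ((M ^ 2 : ℝ) : ℂ) • (1 : Matrix (Fin n) (Fin n) ℂ)).PosSemidef := psd_expr _ hYh M
  have hKps1 : (K (P - k)).PosSemidef := by rw [hK]; exact (matSqrt_spec hA₁).1
  have hKps2 : (K P).PosSemidef := by rw [hK]; exact (matSqrt_spec hA₂).1
  have hKsq1 : (K (P - k)) ^ 2 = (∑ j, (((P - k) j : ℂ) • (1 : Matrix (Fin n) (Fin n) ℂ) + B j) ^ 2)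
      + ((M ^ 2 : ℝ) : ℂ) • (1 : Matrix (Fin n) (Fin n) ℂ) := by
    rw [hK]; exact (matSqrt_spec hA₁).2
  have hKsq2 : (K P) ^ 2 = (∑ j, ((P j : ℂ) • (1 : Matrix (Fin n) (Fin n) ℂ) + B j) ^ 2)
      + ((M ^ 2 : ℝ) : ℂ) • (1 : Matrix (Fin n) (Fin n) ℂ) := by
    rw [hK]; exact (matSqrt_spec hA₂).2
  have hherm1 : (K (P - k)).IsHermitian := hKps1.1
  have hherm2 : (K P).IsHermitian := hKps2.1
  -- minimal eigenvalue of K (P - k), attained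
  obtain ⟨i₀, hi₀⟩ := Finite.exists_min (fun i => hherm1.eigenvalues i)
  set lam := hherm1.eigenvalues i₀ with hlam
  have hEQ : E (P - k) = lam := by
    rw [hE]
    unfold lamMin
    rw [dif_pos hherm1]
    exact le_antisymm (ciInf_le (Finite.bddBelow_range _) i₀) (le_ciInf hi₀)
  have hlam0 : 0 ≤ lam := hKps1.eigenvalues_nonneg i₀
  set psi : Fin n → ℂ := ⇑(hherm1.eigenvectorBasis i₀) with hpsi
  have hψ : dotProduct (star psi) psi = 1 := eigvec_unit hherm1 i₀
  have hψre : ∑ i, Complex.normSq (psi i) = 1 := by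
    have h := dot_self_re psi
    rw [hψ, Complex.one_re] at h
    exact h.symm
  have hKψ : K (P - k) *ᵥ psi = lam • psi := hherm1.mulVec_eigenvectorBasis i₀
  have hA₁ψ : ((∑ j, (((P - k) j : ℂ) • (1 : Matrix (Fin n) (Fin n) ℂ) + B j) ^ 2)
      + ((M ^ 2 : ℝ) : ℂ) • (1 : Matrix (Fin n) (Fin n) ℂ)) *ᵥ psi = (lam ^ 2) • psi := by
    rw [← hKsq1, pow_two, ← Matrix.mulVec_mulVec, hKψ, Matrix.mulVec_smul, hKψ, smul_smul,
      ← pow_two]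
  have hq1 : Complex.re (star psi ⬝ᵥ ((∑ j, (((P - k) j : ℂ) • (1 : Matrix (Fin n) (Fin n) ℂ)
      + B j) ^ 2) + ((M ^ 2 : ℝ) : ℂ) • (1 : Matrix (Fin n) (Fin n) ℂ)) *ᵥ psi) = lam ^ 2 := by
    rw [hA₁ψ, dotProduct_smul, hψ]
    simp [← Complex.ofReal_pow]
  -- abbreviations for the quadratic forms
  set a : Fin 3 → ℝ := fun j => Complex.re (star psi ⬝ᵥ
    ((((P - k) j : ℂ) • (1 : Matrix (Fin n) (Fin n) ℂ) + B j) ^ 2) *ᵥ psi) with ha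
  set b : Fin 3 → ℝ := fun j => Complex.re (star psi ⬝ᵥ
    ((((P - k) j : ℂ) • (1 : Matrix (Fin n) (Fin n) ℂ) + B j)) *ᵥ psi) with hb
  have haj : ∀ j, Complex.re (star psi ⬝ᵥ
      ((((P - k) j : ℂ) • (1 : Matrix (Fin n) (Fin n) ℂ) + B j) ^ 2) *ᵥ psi) = a j :=
    fun j => rfl
  have hbj : ∀ j, Complex.re (star psi ⬝ᵥ
      ((((P - k) j : ℂ) • (1 : Matrix (Fin n) (Fin n) ℂ) + B j)) *ᵥ psi) = b j :=
    fun j => rfl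
  have hqa : ∀ j, a j = ∑ i, Complex.normSq
      (((((P - k) j : ℂ) • (1 : Matrix (Fin n) (Fin n) ℂ) + B j) *ᵥ psi) i) := by
    intro j
    rw [ha]
    simp only
    rw [pow_two, herm_vec_sq _ (hXh j), dot_self_re]
  have ha0 : ∀ j, 0 ≤ a j := fun j => by
    rw [hqa j]; exact Finset.sum_nonneg fun i _ => Complex.normSq_nonneg _
  have hb2 : ∀ j, b j ^ 2 ≤ a j := by
    intro j
    have h1 : b j ≤ Real.sqrt (a j) := by
      have h := dot_re_le psi ((((P - k) j : ℂ) • (1 : Matrix (Fin n) (Fin n) ℂ) + B j) *ᵥ psi)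
      rw [hψre, Real.sqrt_one, one_mul, ← hqa j] at h
      exact h
    have h2 : -(b j) ≤ Real.sqrt (a j) := by
      have h := dot_re_le psi (-((((P - k) j : ℂ) • (1 : Matrix (Fin n) (Fin n) ℂ) + B j) *ᵥ psi))
      rw [hψre, Real.sqrt_one, one_mul] at h
      rw [dotProduct_neg, Complex.neg_re] at h
      simp only [Pi.neg_apply, Complex.normSq_neg] at h
      rw [hbj j, ← hqa j] at h
      exact h
    calc b j ^ 2 ≤ Real.sqrt (a j) ^ 2 := sq_le_sq' (by linarith) h1
      _ = a j := Real.sq_sqrt (ha0 j)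
  -- sum of a's
  have hsuma : a 0 + a 1 + a 2 + M ^ 2 = lam ^ 2 := by
    have h := hq1
    rw [show (∑ j, (((P - k) j : ℂ) • (1 : Matrix (Fin n) (Fin n) ℂ) + B j) ^ 2)
        = ((((P - k) 0 : ℂ) • (1 : Matrix (Fin n) (Fin n) ℂ) + B 0) ^ 2)
        + ((((P - k) 1 : ℂ) • (1 : Matrix (Fin n) (Fin n) ℂ) + B 1) ^ 2)
        + ((((P - k) 2 : ℂ) • (1 : Matrix (Fin n) (Fin n) ℂ) + B 2) ^ 2)
      from Fin.sum_univ_three _] at h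
    rw [q_add, q_add, q_add, q_smul, Matrix.one_mulVec, hψ, Complex.one_re, mul_one] at h
    rw [haj 0, haj 1, haj 2] at h
    linarith [h]
  -- expansion of the squares at P
  have hexp : ∀ j : Fin 3, ((P j : ℂ) • (1 : Matrix (Fin n) (Fin n) ℂ) + B j) ^ 2
      = ((((P - k) j : ℂ) • (1 : Matrix (Fin n) (Fin n) ℂ) + B j)) ^ 2
        + ((2 * k j : ℝ) : ℂ) • ((((P - k) j : ℂ) • (1 : Matrix (Fin n) (Fin n) ℂ) + B j))
        + ((k j ^ 2 : ℝ) : ℂ) • (1 : Matrix (Fin n) (Fin n) ℂ) := by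
    intro j
    rw [show ((P j : ℂ)) • (1 : Matrix (Fin n) (Fin n) ℂ) + B j
        = ((((P - k) j : ℂ) • (1 : Matrix (Fin n) (Fin n) ℂ) + B j)) + ((k j : ℝ) : ℂ) • 1 by
      rw [show ((P j : ℝ) : ℂ) = (((P - k) j : ℝ) : ℂ) + ((k j : ℝ) : ℂ) by
        push_cast [Pi.sub_apply]; ring]
      rw [add_smul]; abel]
    exact sq_shift _ _
  -- quadratic form at P
  have hq2 : Complex.re (star psi ⬝ᵥ ((∑ j, ((P j : ℂ) • (1 : Matrix (Fin n) (Fin n) ℂ)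
        + B j) ^ 2) + ((M ^ 2 : ℝ) : ℂ) • (1 : Matrix (Fin n) (Fin n) ℂ)) *ᵥ psi)
      = (a 0 + a 1 + a 2) + 2 * (k 0 * b 0 + k 1 * b 1 + k 2 * b 2)
        + (k 0 ^ 2 + k 1 ^ 2 + k 2 ^ 2) + M ^ 2 := by
    rw [show (∑ j, ((P j : ℂ) • (1 : Matrix (Fin n) (Fin n) ℂ) + B j) ^ 2)
        = (((P 0 : ℂ) • (1 : Matrix (Fin n) (Fin n) ℂ) + B 0) ^ 2)
        + (((P 1 : ℂ) • (1 : Matrix (Fin n) (Fin n) ℂ) + B 1) ^ 2)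
        + (((P 2 : ℂ) • (1 : Matrix (Fin n) (Fin n) ℂ) + B 2) ^ 2)
      from Fin.sum_univ_three _]
    rw [hexp 0, hexp 1, hexp 2]
    rw [q_add, q_add, q_add, q_add, q_add, q_add, q_add, q_add, q_add]
    rw [q_smul, q_smul, q_smul, q_smul, q_smul, q_smul, q_smul]
    rw [Matrix.one_mulVec, hψ, Complex.one_re]
    rw [haj 0, haj 1, haj 2, hbj 0, hbj 1, hbj 2]
    ring
  -- Cauchy-Schwarz in ℝ³
  have hkb : k 0 * b 0 + k 1 * b 1 + k 2 * b 2 ≤ c * lam := by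
    have h1 : ∑ j, k j * b j ≤ Real.sqrt (∑ j, k j ^ 2) * Real.sqrt (∑ j, b j ^ 2) := cs_sum k b
    have h2 : ∑ j, b j ^ 2 ≤ lam ^ 2 := by
      rw [Fin.sum_univ_three]
      have := hb2 0; have := hb2 1; have := hb2 2
      nlinarith [sq_nonneg M]
    have h3 : Real.sqrt (∑ j, b j ^ 2) ≤ lam := by
      calc Real.sqrt (∑ j, b j ^ 2) ≤ Real.sqrt (lam ^ 2) := Real.sqrt_le_sqrt h2
        _ = lam := by rw [Real.sqrt_sq hlam0]
    calc k 0 * b 0 + k 1 * b 1 + k 2 * b 2 = ∑ j, k j * b j := by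
          rw [Fin.sum_univ_three]
      _ ≤ Real.sqrt (∑ j, k j ^ 2) * Real.sqrt (∑ j, b j ^ 2) := h1
      _ ≤ c * lam := by
          rw [← hc]
          exact mul_le_mul_of_nonneg_left h3 hc0
  have hq2le : Complex.re (star psi ⬝ᵥ ((∑ j, ((P j : ℂ) • (1 : Matrix (Fin n) (Fin n) ℂ)
        + B j) ^ 2) + ((M ^ 2 : ℝ) : ℂ) • (1 : Matrix (Fin n) (Fin n) ℂ)) *ᵥ psi)
      ≤ (lam + c) ^ 2 := by
    rw [hq2]
    have hk2 : k 0 ^ 2 + k 1 ^ 2 + k 2 ^ 2 = c ^ 2 := by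
      rw [hc2, Fin.sum_univ_three]
    nlinarith [hkb, hsuma, ha0 0, ha0 1, ha0 2]
  -- Rayleigh bound for E P
  have hEP : E P ≤ lam + c := by
    have hray : E P ≤ Complex.re (star psi ⬝ᵥ (K P) *ᵥ psi) := by
      rw [hE]
      unfold lamMin
      rw [dif_pos hherm2]
      exact rayleigh_min_le _ hherm2 psi hψ
    have hstep : Complex.re (star psi ⬝ᵥ (K P) *ᵥ psi) ≤ lam + c := by
      have h1 := dot_re_le psi ((K P) *ᵥ psi)
      rw [hψre, Real.sqrt_one, one_mul] at h1
      have h2 : ∑ i, Complex.normSq (((K P) *ᵥ psi) i)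
          = Complex.re (star psi ⬝ᵥ ((K P) ^ 2) *ᵥ psi) := by
        rw [pow_two, herm_vec_sq _ hherm2, dot_self_re]
      have h3 : Complex.re (star psi ⬝ᵥ ((K P) ^ 2) *ᵥ psi) ≤ (lam + c) ^ 2 := by
        rw [hKsq2]; exact hq2le
      calc Complex.re (star psi ⬝ᵥ (K P) *ᵥ psi)
          ≤ Real.sqrt (∑ i, Complex.normSq (((K P) *ᵥ psi) i)) := h1
        _ ≤ Real.sqrt ((lam + c) ^ 2) := Real.sqrt_le_sqrt (by rw [h2]; exact h3)
        _ = lam + c := Real.sqrt_sq (by linarith)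
    exact hray.trans hstep
  rw [hEQ]
  linarith
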